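/- Let (h_t)_{t∈ℕ} and (g_t)_{t∈ℕ} be sequences of nonnegative real numbers such that Σ_{t=0}^∞ g_t = ∞, Σ_{t=0}^∞ g_t h_t < ∞, and there exists a constant K ≥ 0 with |h_{t+1} − h_t| ≤ K g_t for all t. Then h_t → 0 as t → ∞. -/
import Mathlib


open Filter

/-- **Deterministic lemma used in the proof of Theorem 3.3.**
Let `(h t)` and `(g t)` be nonnegative real sequences with `∑ t, g t = ∞` (the partial
sums tend to infinity), `∑ t, g t * h t < ∞`, and suppose there is a constant `K ≥ 0`
with `|h (t+1) − h t| ≤ K * g t` for all `t`. Then `h t → 0` as `t → ∞`. -/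
theorem summable_weighted_with_controlled_increments_tendsto_zero
    (h g : ℕ → ℝ)
    (hh : ∀ t, 0 ≤ h t) (hg : ∀ t, 0 ≤ g t)
    (hgdiv : Tendsto (fun n => ∑ t ∈ Finset.range n, g t) atTop atTop)
    (hgh : Summable fun t => g t * h t)
    (K : ℝ) (hK : 0 ≤ K)
    (hinc : ∀ t, |h (t + 1) - h t| ≤ K * g t) :
    Tendsto h atTop (nhds 0) := by
  have hK1 : (0:ℝ) < K + 1 := by linarith
  have hinc1 : ∀ t, |h (t + 1) - h t| ≤ (K + 1) * g t := fun t =>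
    (hinc t).trans (by nlinarith [hg t])
  -- g is not summable
  have hgns : ¬ Summable g := by
    intro hs
    exact not_tendsto_atTop_of_tendsto_nhds hs.hasSum.tendsto_sum_nat hgdiv
  -- for every ε > 0 and N, there is m ≥ N with h m < ε
  have factA : ∀ ε : ℝ, 0 < ε → ∀ N : ℕ, ∃ m, N ≤ m ∧ h m < ε := by
    intro ε hε N
    by_contra hcon
    push_neg at hcon
    apply hgns
    have h1 : Summable (fun t => g (t + N) * h (t + N)) :=
      (summable_nat_add_iff N).2 hgh
    have h2 : Summable (fun t => g (t + N) * ε) := by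
      apply Summable.of_nonneg_of_le (fun t => mul_nonneg (hg _) hε.le) _ h1
      intro t
      exact mul_le_mul_of_nonneg_left (hcon (t + N) (Nat.le_add_left _ _)) (hg _)
    have h3 : Summable (fun t => g (t + N)) := by
      have := h2.mul_right (ε⁻¹)
      simpa [mul_assoc, mul_inv_cancel₀ (ne_of_gt hε)] using this
    exact (summable_nat_add_iff N).1 h3
  -- partial sums of g*h are Cauchy
  set S : ℕ → ℝ := fun n => ∑ t ∈ Finset.range n, g t * h t with hS
  have hcauchy : CauchySeq S := hgh.hasSum.tendsto_sum_nat.cauchySeq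
  rw [Metric.tendsto_atTop]
  intro ε hε
  by_contra hcon
  push_neg at hcon
  have hfreq : ∀ N : ℕ, ∃ n, N ≤ n ∧ ε ≤ h n := by
    intro N
    obtain ⟨n, hn, hn2⟩ := hcon N
    refine ⟨n, hn, ?_⟩
    rw [Real.dist_eq, sub_zero, abs_of_nonneg (hh n)] at hn2
    exact hn2
  set δ : ℝ := ε ^ 2 / (8 * (K + 1)) with hδdef
  have hδ : 0 < δ := by positivity
  obtain ⟨N, hN⟩ := Metric.cauchySeq_iff'.1 hcauchy δ hδ
  obtain ⟨s, hsN, hsε⟩ := hfreq N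
  -- first time after s where h drops below ε/2
  have hex : ∃ m, s + 1 ≤ m ∧ h m < ε / 2 := factA (ε / 2) (by linarith) (s + 1)
  classical
  set u := Nat.find hex with hu
  obtain ⟨hu1, hu2⟩ := Nat.find_spec hex
  have hsu : s ≤ u := le_trans (Nat.le_succ s) hu1
  have hmid : ∀ t, s ≤ t → t < u → ε / 2 ≤ h t := by
    intro t hst htu
    rcases eq_or_lt_of_le hst with rfl | hlt
    · linarith
    · have := Nat.find_min hex htu
      push_neg at this
      exact this hlt
  -- telescoping: h u - h s = ∑_{t ∈ Ico s u} (h (t+1) - h t)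
  have htel : ∑ t ∈ Finset.Ico s u, (h (t + 1) - h t) = h u - h s := by
    rw [Finset.sum_Ico_eq_sub _ hsu, Finset.sum_range_sub, Finset.sum_range_sub]
    ring
  set G : ℝ := ∑ t ∈ Finset.Ico s u, g t with hG
  have hGb : ε / 2 ≤ (K + 1) * G := by
    have h1 : h s - h u ≤ ∑ t ∈ Finset.Ico s u, |h (t + 1) - h t| := by
      calc h s - h u = -(h u - h s) := by ring
        _ = -(∑ t ∈ Finset.Ico s u, (h (t + 1) - h t)) := by rw [htel]
        _ ≤ |∑ t ∈ Finset.Ico s u, (h (t + 1) - h t)| := neg_le_abs _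
        _ ≤ ∑ t ∈ Finset.Ico s u, |h (t + 1) - h t| := Finset.abs_sum_le_sum_abs _ _
    have h2 : ∑ t ∈ Finset.Ico s u, |h (t + 1) - h t| ≤ (K + 1) * G := by
      rw [hG, Finset.mul_sum]
      exact Finset.sum_le_sum fun t _ => hinc1 t
    have h3 : ε / 2 ≤ h s - h u := by linarith
    linarith
  -- lower bound on the chunk of the series
  have hchunk : 2 * δ ≤ S u - S s := by
    have h1 : S u - S s = ∑ t ∈ Finset.Ico s u, g t * h t := by
      rw [hS]
      simp [Finset.sum_Ico_eq_sub _ hsu]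
    have h2 : (ε / 2) * G ≤ ∑ t ∈ Finset.Ico s u, g t * h t := by
      rw [hG, Finset.mul_sum]
      apply Finset.sum_le_sum
      intro t ht
      rw [Finset.mem_Ico] at ht
      have := hmid t ht.1 ht.2
      have := hg t
      nlinarith
    have h3 : ε / (2 * (K + 1)) ≤ G := by
      rw [div_le_iff₀ (by positivity)] at *
      nlinarith
    have h4 : 2 * δ ≤ (ε / 2) * G := by
      rw [hδdef]
      have : (ε / 2) * (ε / (2 * (K + 1))) ≤ (ε / 2) * G :=
        mul_le_mul_of_nonneg_left h3 (by linarith)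
      calc 2 * (ε ^ 2 / (8 * (K + 1))) = (ε / 2) * (ε / (2 * (K + 1))) := by
            field_simp; ring
        _ ≤ (ε / 2) * G := this
    linarith
  -- but Cauchy forces the chunk to be small
  have hu' : N ≤ u := le_trans hsN hsu
  have hc1 := hN u hu'
  have hc2 := hN s hsN
  rw [Real.dist_eq] at hc1 hc2
  have := abs_lt.1 hc1
  have := abs_lt.1 hc2
  linarith [abs_lt.1 hc1, abs_lt.1 hc2]
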